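/- Compression Lemma: let R be a left-linear TRS over a signature Σ (no variable occurs more than once in any left-hand side) all of whose left-hand sides are finite terms. Then every infinitary reduction can be compressed to length at most ω: →∞ ⊆ →^{≤ω}, i.e., s →∞ t implies s →^{≤ω} t for all s, t ∈ T. -/

import Mathlib

open Relation

/-- A signature: a type of function symbols together with an arity for each symbol. -/
structure Signature where
  Sym : Type
  ar : Sym → ℕ

/-- The polynomial functor whose final coalgebra is the set of (finite and infinite)
terms over the signature `Sg` and the set `X` of variables. -/
def TermF (Sg : Signature) (X : Type) : PFunctor.{0} :=
  ⟨X ⊕ Sg.Sym, fun a => Sum.rec (fun _ => Empty) (fun f => Fin (Sg.ar f)) a⟩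

/-- The set `T` of finite and infinite terms over `Sg` and `X`, defined coinductively
(as the final coalgebra, i.e. the M-type, of `TermF Sg X`). -/
def Tm (Sg : Signature) (X : Type) : Type := PFunctor.M (TermF Sg X)

variable {Sg : Signature} {X : Type}

/-- The term consisting of a single variable. -/
def Tm.var (x : X) : Tm Sg X := PFunctor.M.mk ⟨Sum.inl x, Empty.elim⟩

/-- The term `f(t₁,…,tₙ)` with root symbol `f` and arguments `args`. -/
def Tm.node (f : Sg.Sym) (args : Fin (Sg.ar f) → Tm Sg X) : Tm Sg X :=
  PFunctor.M.mk ⟨Sum.inr f, args⟩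

/-- One step of the corecursive definition of substitution:
`Sum.inl t` means `t` still has to be substituted, `Sum.inr t` means `t` is copied. -/
def substAux (σ : X → Tm Sg X) :
    (Tm Sg X ⊕ Tm Sg X) → (TermF Sg X) (Tm Sg X ⊕ Tm Sg X) := fun s =>
  match s with
  | Sum.inl t =>
    match PFunctor.M.dest t with
    | ⟨Sum.inl x, _⟩ =>
        ⟨(PFunctor.M.dest (σ x)).1, fun b => Sum.inr ((PFunctor.M.dest (σ x)).2 b)⟩
    | ⟨Sum.inr f, k⟩ => ⟨Sum.inr f, fun b => Sum.inl (k b)⟩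
  | Sum.inr t =>
      ⟨(PFunctor.M.dest t).1, fun b => Sum.inr ((PFunctor.M.dest t).2 b)⟩

/-- Application `tσ` of a substitution `σ : X → T` to a term `t`, defined corecursively. -/
def subst (σ : X → Tm Sg X) (t : Tm Sg X) : Tm Sg X :=
  PFunctor.M.corec (substAux σ) (Sum.inl t)

/-- `Occurs x t`: the variable `x` occurs in the term `t`. -/
inductive Occurs (x : X) : Tm Sg X → Prop
  | here {t : Tm Sg X} : t = Tm.var x → Occurs x t
  | deeper {t : Tm Sg X} {f : Sg.Sym} {args : Fin (Sg.ar f) → Tm Sg X}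
      (i : Fin (Sg.ar f)) : t = Tm.node f args → Occurs x (args i) → Occurs x t

/-- A term rewriting system over `Sg` and `X`: a set of rules `ℓ → r` such that
`ℓ` is not a variable and all variables of `r` occur in `ℓ`. -/
structure TRS (Sg : Signature) (X : Type) where
  rules : Set (Tm Sg X × Tm Sg X)
  lhs_not_var : ∀ l r, (l, r) ∈ rules → ∀ x : X, l ≠ Tm.var x
  vars_lhs : ∀ l r, (l, r) ∈ rules → ∀ x : X, Occurs x r → Occurs x l

/-- Relations on terms. -/
abbrev TRel (Sg : Signature) (X : Type) := Tm Sg X → Tm Sg X → Prop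

/-- The root step relation `→ε := {(ℓσ, rσ) | ℓ → r ∈ R, σ a substitution}`. -/
def RootStep (R : TRS Sg X) : TRel Sg X := fun s t =>
  ∃ l r, (l, r) ∈ R.rules ∧ ∃ σ : X → Tm Sg X, s = subst σ l ∧ t = subst σ r

/-- `StepAt Q p s t`: a `Q`-step at position `p`, i.e. `s = C[u]`, `t = C[v]` with
`(u,v) ∈ Q` and `C` a one-hole context whose hole is at position `p`. -/
inductive StepAt (Q : TRel Sg X) : List ℕ → Tm Sg X → Tm Sg X → Prop
  | here {s t : Tm Sg X} : Q s t → StepAt Q [] s t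
  | deeper {f : Sg.Sym} {ss ts : Fin (Sg.ar f) → Tm Sg X} (i : Fin (Sg.ar f))
      {p : List ℕ} : StepAt Q p (ss i) (ts i) → (∀ j, j ≠ i → ss j = ts j) →
      StepAt Q ((i : ℕ) :: p) (Tm.node f ss) (Tm.node f ts)

/-- The one-step rewrite relation `→` of a TRS: a root step applied inside a
one-hole context. -/
def Step (R : TRS Sg X) : TRel Sg X := fun s t => ∃ p, StepAt (RootStep R) p s t

/-- The lifting `↓R` of a relation `R`:
`↓R := {(f(s₁,…,sₙ), f(t₁,…,tₙ)) | f ∈ Σ, s₁ R t₁, …, sₙ R tₙ} ∪ Id`. -/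
def liftRel (R : TRel Sg X) : TRel Sg X := fun s t =>
  s = t ∨ ∃ (f : Sg.Sym) (ss ts : Fin (Sg.ar f) → Tm Sg X),
    s = Tm.node f ss ∧ t = Tm.node f ts ∧ ∀ i, R (ss i) (ts i)

lemma liftRel_mono : Monotone (liftRel (Sg := Sg) (X := X)) := by
  intro R S h s t hst
  rcases hst with h1 | ⟨f, ss, ts, rfl, rfl, hi⟩
  · exact Or.inl h1
  · exact Or.inr ⟨f, ss, ts, rfl, rfl, fun i => h _ _ (hi i)⟩

/-- Relational composition `r ∘ s`. -/
def relComp (r s : TRel Sg X) : TRel Sg X := fun a c => ∃ b, r a b ∧ s b c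

/-- The monotone operator `S ↦ (→ε ∪ ↓R)* ∘ ↓S` (for a fixed `R`). -/
def iredInnerHom (R : TRS Sg X) (U : TRel Sg X) : TRel Sg X →o TRel Sg X where
  toFun S := relComp
    (ReflTransGen (fun s t => RootStep R s t ∨ liftRel U s t)) (liftRel S)
  monotone' := by
    intro S S' h a c hac
    rcases hac with ⟨b, h1, h2⟩
    exact ⟨b, h1, liftRel_mono h _ _ h2⟩

/-- The monotone operator `R ↦ νS.((→ε ∪ ↓R)* ∘ ↓S)`. -/
def iredHom (R : TRS Sg X) : TRel Sg X →o TRel Sg X where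
  toFun U := OrderHom.gfp (iredInnerHom R U)
  monotone' := by
    intro U V h
    apply OrderHom.gfp.monotone
    intro S a c hac
    rcases hac with ⟨b, h1, h2⟩
    refine ⟨b, ?_, h2⟩
    exact ReflTransGen.mono (fun x y hxy => hxy.imp id (fun h' => liftRel_mono h _ _ h')) _ _ h1

/-- The infinitary rewrite relation `→∞ := μR.νS.((→ε ∪ ↓R)* ∘ ↓S)`. -/
def ired (R : TRS Sg X) : TRel Sg X := OrderHom.lfp (iredHom R)

/-- The monotone operator `R' ↦ (→ε ∪ ↓R')*`. -/
def biHom (R : TRS Sg X) : TRel Sg X →o TRel Sg X where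
  toFun U := ReflTransGen (fun s t => RootStep R s t ∨ liftRel U s t)
  monotone' := by
    intro U V h a b hab
    exact ReflTransGen.mono (fun x y hxy => hxy.imp id (fun h' => liftRel_mono h _ _ h')) _ _ hab

/-- The bi-infinite rewrite relation `∞→ := νR.(→ε ∪ ↓R)*`. -/
def bired (R : TRS Sg X) : TRel Sg X := OrderHom.gfp (biHom R)

/-- The monotone operator `R' ↦ (←ε ∪ →ε ∪ ↓R')*`. -/
def ieqHom (R : TRS Sg X) : TRel Sg X →o TRel Sg X where
  toFun U := ReflTransGen (fun s t => RootStep R t s ∨ RootStep R s t ∨ liftRel U s t)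
  monotone' := by
    intro U V h a b hab
    exact ReflTransGen.mono
      (fun x y hxy => hxy.imp id (fun h' => h'.imp id (fun h'' => liftRel_mono h _ _ h''))) _ _ hab

/-- The infinitary equational reasoning relation `=∞ := νR.(←ε ∪ →ε ∪ ↓R)*`. -/
def ieq (R : TRS Sg X) : TRel Sg X := OrderHom.gfp (ieqHom R)

/-- `Agree n s t`: the terms `s` and `t` coincide up to depth `n`
(i.e. `d(s,t) ≤ 2^{-n}` for the standard metric `d`). -/
def Agree : ℕ → Tm Sg X → Tm Sg X → Prop
  | 0, _, _ => True
  | n + 1, s, t =>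
      (∃ x : X, s = Tm.var x ∧ t = Tm.var x) ∨
      ∃ (f : Sg.Sym) (ss ts : Fin (Sg.ar f) → Tm Sg X),
        s = Tm.node f ss ∧ t = Tm.node f ts ∧ ∀ i, Agree n (ss i) (ts i)

/-- `ConvTo t p l tl`: as `β` approaches the ordinal `l` from below,
`d(t β, tl)` tends to `0` and the depth `|p β|` tends to infinity. -/
def ConvTo (t : Ordinal.{0} → Tm Sg X) (p : Ordinal.{0} → List ℕ) (l : Ordinal.{0})
    (tl : Tm Sg X) : Prop :=
  (∀ n : ℕ, ∃ β₀ < l, ∀ β, β₀ ≤ β → β < l → Agree n (t β) tl) ∧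
  (∀ n : ℕ, ∃ β₀ < l, ∀ β, β₀ ≤ β → β < l → n ≤ (p β).length)

/-- A transfinite sequence of `Q`-steps `(t_β →_{p_β} t_{β+1})_{β<α}` of ordinal
length `α`, weakly continuous and with depths tending to infinity at every limit
ordinal `λ < α`. -/
structure TransSeq (Q : TRel Sg X) (α : Ordinal.{0}) where
  t : Ordinal.{0} → Tm Sg X
  pos : Ordinal.{0} → List ℕ
  step : ∀ β < α, StepAt Q (pos β) (t β) (t (β + 1))
  conv : ∀ l < α, Order.IsSuccLimit l → ConvTo t pos l (t l)

/-- A transfinite rewrite sequence is strongly convergent if its length is a successor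
ordinal (or zero), or there exists a final term to which it converges (with depths
tending to infinity) at the limit. -/
def TransSeq.StronglyConvergent {Q : TRel Sg X} {α : Ordinal.{0}} (s : TransSeq Q α) : Prop :=
  Order.IsSuccLimit α → ∃ tl, ConvTo s.t s.pos α tl

/-- `SCRed Q s t`: there is a strongly convergent transfinite sequence of `Q`-steps
from `s` to `t`. -/
def SCRed (Q : TRel Sg X) : TRel Sg X := fun a b =>
  ∃ (α : Ordinal.{0}) (s : TransSeq Q α), s.t 0 = a ∧ s.t α = b ∧
    (Order.IsSuccLimit α → ConvTo s.t s.pos α b)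

/-- The standard, ordinal-based infinitary rewrite relation `→∞_ord`:
strongly convergent transfinite rewrite sequences. -/
def iredOrd (R : TRS Sg X) : TRel Sg X := SCRed (RootStep R)

-- auxiliary facts about the term constructors
lemma node_ne_var (f : Sg.Sym) (args : Fin (Sg.ar f) → Tm Sg X) (x : X) :
    Tm.node f args ≠ Tm.var x := by
  intro h
  have h1 := congrArg (fun u => (PFunctor.M.dest u).1) h
  simp only [Tm.node, Tm.var, PFunctor.M.dest_mk] at h1
  exact Sum.inr_ne_inl h1

lemma node_inj_sym {f g : Sg.Sym} {ss : Fin (Sg.ar f) → Tm Sg X}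
    {ts : Fin (Sg.ar g) → Tm Sg X} (h : Tm.node f ss = Tm.node g ts) : f = g := by
  have h1 := congrArg (fun u => (PFunctor.M.dest u).1) h
  simp only [Tm.node, PFunctor.M.dest_mk] at h1
  exact Sum.inr.inj h1

lemma node_inj_args {f : Sg.Sym} {ss ts : Fin (Sg.ar f) → Tm Sg X}
    (h : Tm.node f ss = Tm.node f ts) : ss = ts := by
  have h' : (PFunctor.M.mk ⟨Sum.inr f, ss⟩ : Tm Sg X) = PFunctor.M.mk ⟨Sum.inr f, ts⟩ := h
  have h1 := PFunctor.M.mk_inj h'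
  injection h1 with h2 h3

lemma var_inj {x y : X} (h : (Tm.var x : Tm Sg X) = Tm.var y) : x = y := by
  have h1 := congrArg (fun u => (PFunctor.M.dest u).1) h
  simp only [Tm.var, PFunctor.M.dest_mk] at h1
  exact Sum.inl.inj h1

lemma occurs_var_iff {x y : X} : Occurs x (Tm.var y : Tm Sg X) ↔ x = y := by
  constructor
  · intro h
    cases h with
    | here h => exact (var_inj h.symm)
    | deeper i h _ => exact absurd h.symm (node_ne_var _ _ _)
  · rintro rfl
    exact Occurs.here rfl

lemma occurs_node_iff {x : X} {f : Sg.Sym} {args : Fin (Sg.ar f) → Tm Sg X} :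
    Occurs x (Tm.node f args) ↔ ∃ i, Occurs x (args i) := by
  constructor
  · intro h
    cases h with
    | here h => exact absurd h (node_ne_var _ _ _)
    | deeper i h hocc =>
      obtain rfl := node_inj_sym h
      obtain rfl := node_inj_args h
      exact ⟨i, hocc⟩
  · rintro ⟨i, h⟩
    exact Occurs.deeper i rfl h

/-- `OccursAt x p t`: the variable `x` occurs at position `p` in the term `t`. -/
inductive OccursAt (x : X) : List ℕ → Tm Sg X → Prop
  | here {t : Tm Sg X} : t = Tm.var x → OccursAt x [] t
  | deeper {t : Tm Sg X} {f : Sg.Sym} {args : Fin (Sg.ar f) → Tm Sg X}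
      (i : Fin (Sg.ar f)) {p : List ℕ} :
      t = Tm.node f args → OccursAt x p (args i) → OccursAt x ((i : ℕ) :: p) t

/-- `FiniteTm t`: the term `t` is finite (its syntax tree is well-founded). -/
inductive FiniteTm : Tm Sg X → Prop
  | var {t : Tm Sg X} (x : X) : t = Tm.var x → FiniteTm t
  | node {t : Tm Sg X} {f : Sg.Sym} {args : Fin (Sg.ar f) → Tm Sg X} :
      t = Tm.node f args → (∀ i, FiniteTm (args i)) → FiniteTm t

/-- The monotone operator `S ↦ (→)* ∘ ↓S`. -/
def oredHom (R : TRS Sg X) : TRel Sg X →o TRel Sg X where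
  toFun S := relComp (Relation.ReflTransGen (Step R)) (liftRel S)
  monotone' := by
    intro S S' h a c hac
    rcases hac with ⟨b, h1, h2⟩
    exact ⟨b, h1, liftRel_mono h _ _ h2⟩

/-- The relation `→^{≤ω} := νS.((→)* ∘ ↓S)` of reductions of length at most `ω`. -/
def ored (R : TRS Sg X) : TRel Sg X := OrderHom.gfp (oredHom R)

section Aux

variable {Sg : Signature} {X : Type}

/-! ### Basic term lemmas -/

lemma tm_cases (t : Tm Sg X) :
    (∃ x : X, t = Tm.var x) ∨ ∃ (f : Sg.Sym) (args : Fin (Sg.ar f) → Tm Sg X),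
      t = Tm.node f args := by
  rcases h : PFunctor.M.dest t with ⟨a, g⟩
  rcases a with x | f
  · left
    refine ⟨x, ?_⟩
    have hg : g = Empty.elim := funext fun e => e.elim
    rw [Tm.var, ← hg, ← h]; exact (PFunctor.M.mk_dest (t : PFunctor.M (TermF Sg X))).symm
  · right
    exact ⟨f, g, by unfold Tm.node; rw [← h]; exact (PFunctor.M.mk_dest (t : PFunctor.M (TermF Sg X))).symm⟩

lemma tm_bisim (Rel : TRel Sg X)
    (h : ∀ a b, Rel a b → a = b ∨ (∃ x : X, a = Tm.var x ∧ b = Tm.var x) ∨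
      ∃ (f : Sg.Sym) (as bs : Fin (Sg.ar f) → Tm Sg X),
        a = Tm.node f as ∧ b = Tm.node f bs ∧ ∀ i, Rel (as i) (bs i)) :
    ∀ a b, Rel a b → a = b := by
  have main : ∀ a b, (Rel a b ∨ a = b) → a = b := by
    apply PFunctor.M.bisim
    rintro x y (hxy | rfl)
    · rcases h x y hxy with rfl | ⟨z, rfl, rfl⟩ | ⟨f, as, bs, rfl, rfl, hargs⟩
      · exact ⟨(PFunctor.M.dest x).1, (PFunctor.M.dest x).2, (PFunctor.M.dest x).2,
          rfl, rfl, fun i => Or.inr rfl⟩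
      · exact ⟨Sum.inl z, Empty.elim, Empty.elim, rfl, rfl, fun i => i.elim⟩
      · exact ⟨Sum.inr f, as, bs, rfl, rfl, fun i => Or.inl (hargs i)⟩
    · exact ⟨(PFunctor.M.dest x).1, (PFunctor.M.dest x).2, (PFunctor.M.dest x).2,
        rfl, rfl, fun i => Or.inr rfl⟩
  exact fun a b hab => main a b (Or.inl hab)

/-! ### Computation rules for `subst` -/

lemma corec_substAux_inr (σ : X → Tm Sg X) (t : Tm Sg X) :
    PFunctor.M.corec (substAux σ) (Sum.inr t) = t := by
  apply PFunctor.M.bisim (fun a b => a = PFunctor.M.corec (substAux σ) (Sum.inr b))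
  · rintro x y rfl
    refine ⟨(PFunctor.M.dest y).1,
      fun b => PFunctor.M.corec (substAux σ) (Sum.inr ((PFunctor.M.dest y).2 b)),
      (PFunctor.M.dest y).2, ?_, rfl, fun i => rfl⟩
    rw [PFunctor.M.dest_corec]
    rfl
  · rfl

lemma subst_var (σ : X → Tm Sg X) (x : X) : subst σ (Tm.var x) = σ x := by
  have h2 : (fun b => PFunctor.M.corec (substAux σ) (Sum.inr ((PFunctor.M.dest (σ x)).2 b)))
      = (PFunctor.M.dest (σ x)).2 := funext fun b => corec_substAux_inr σ _
  rw [← PFunctor.M.mk_dest (subst σ (Tm.var x)), subst, PFunctor.M.dest_corec]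
  show PFunctor.M.mk ⟨(PFunctor.M.dest (σ x)).1,
    fun b => PFunctor.M.corec (substAux σ) (Sum.inr ((PFunctor.M.dest (σ x)).2 b))⟩ = σ x
  rw [h2]
  exact PFunctor.M.mk_dest (σ x)

lemma subst_node (σ : X → Tm Sg X) (f : Sg.Sym) (args : Fin (Sg.ar f) → Tm Sg X) :
    subst σ (Tm.node f args) = Tm.node f (fun i => subst σ (args i)) := by
  rw [← PFunctor.M.mk_dest (subst σ (Tm.node f args)), subst, PFunctor.M.dest_corec]
  rfl

end Aux
section Aux2

variable {Sg : Signature} {X : Type}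

lemma occurs_occursAt {x : X} {t : Tm Sg X} (h : Occurs x t) : ∃ p, OccursAt x p t := by
  induction h with
  | here h => exact ⟨[], OccursAt.here h⟩
  | deeper i h _ ih => exact ⟨(i : ℕ) :: ih.choose, OccursAt.deeper i h ih.choose_spec⟩

lemma subst_ext {τ σ : X → Tm Sg X} {t : Tm Sg X}
    (h : ∀ x, Occurs x t → τ x = σ x) : subst τ t = subst σ t := by
  apply tm_bisim (fun a b => ∃ u : Tm Sg X,
    (∀ x, Occurs x u → τ x = σ x) ∧ a = subst τ u ∧ b = subst σ u)
  · rintro a b ⟨u, hu, rfl, rfl⟩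
    rcases tm_cases u with ⟨x, rfl⟩ | ⟨f, args, rfl⟩
    · left
      rw [subst_var, subst_var, hu x (Occurs.here rfl)]
    · refine Or.inr (Or.inr ⟨f, _, _, subst_node τ f args, subst_node σ f args, fun i => ?_⟩)
      exact ⟨args i, fun x hx => hu x (Occurs.deeper i rfl hx), rfl, rfl⟩
  · exact ⟨t, h, rfl, rfl⟩

/-! ### Basic facts about `ored` -/

variable {R : TRS Sg X}

lemma ored_unfold : ored R = (oredHom R) (ored R) := (OrderHom.map_gfp (oredHom R)).symm

lemma ored_dest {s t : Tm Sg X} (h : ored R s t) :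
    ∃ m, ReflTransGen (Step R) s m ∧ liftRel (ored R) m t := by
  rw [ored_unfold] at h; exact h

lemma ored_intro {s m t : Tm Sg X} (h1 : ReflTransGen (Step R) s m)
    (h2 : liftRel (ored R) m t) : ored R s t := by
  rw [ored_unfold]; exact ⟨m, h1, h2⟩

lemma ored_refl (t : Tm Sg X) : ored R t t :=
  ored_intro ReflTransGen.refl (Or.inl rfl)

lemma liftRel_ored {s t : Tm Sg X} (h : liftRel (ored R) s t) : ored R s t :=
  ored_intro ReflTransGen.refl h

lemma rtg_ored {s m t : Tm Sg X} (h1 : ReflTransGen (Step R) s m) (h2 : ored R m t) :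
    ored R s t := by
  rcases ored_dest h2 with ⟨m1, h3, h4⟩
  exact ored_intro (h1.trans h3) h4

lemma step_ored {s t : Tm Sg X} (h : Step R s t) : ored R s t :=
  ored_intro (ReflTransGen.single h) (Or.inl rfl)

lemma rootStep_step {s t : Tm Sg X} (h : RootStep R s t) : Step R s t :=
  ⟨[], StepAt.here h⟩

/-! ### Congruence of rewriting -/

lemma rtg_update {f : Sg.Sym} (ss : Fin (Sg.ar f) → Tm Sg X) (i : Fin (Sg.ar f))
    {a b : Tm Sg X} (h : ReflTransGen (Step R) a b) :
    ReflTransGen (Step R) (Tm.node f (Function.update ss i a))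
      (Tm.node f (Function.update ss i b)) := by
  induction h with
  | refl => exact ReflTransGen.refl
  | tail _ hstep ih =>
    refine ih.tail ?_
    rcases hstep with ⟨p, hp⟩
    refine ⟨(i : ℕ) :: p, StepAt.deeper i ?_ ?_⟩
    · rw [Function.update_self, Function.update_self]; exact hp
    · intro j hj; rw [Function.update_of_ne hj, Function.update_of_ne hj]

lemma rtg_node {f : Sg.Sym} {ss ts : Fin (Sg.ar f) → Tm Sg X}
    (h : ∀ i, ReflTransGen (Step R) (ss i) (ts i)) :
    ReflTransGen (Step R) (Tm.node f ss) (Tm.node f ts) := by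
  have main : ∀ s : Finset (Fin (Sg.ar f)),
      ReflTransGen (Step R) (Tm.node f ss)
        (Tm.node f (fun i => if i ∈ s then ts i else ss i)) := by
    intro s
    induction s using Finset.induction with
    | empty => exact ReflTransGen.refl
    | @insert j s hj ih =>
      refine ih.trans ?_
      have e1 : (fun i => if i ∈ s then ts i else ss i)
          = Function.update (fun i => if i ∈ s then ts i else ss i) j
            (if j ∈ s then ts j else ss j) := by
        rw [Function.update_eq_self]
      have e2 : (fun i => if i ∈ insert j s then ts i else ss i)
          = Function.update (fun i => if i ∈ s then ts i else ss i) j (ts j) := by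
        funext i
        rcases eq_or_ne i j with rfl | hij
        · simp
        · rw [Function.update_of_ne hij]
          simp [Finset.mem_insert, hij]
      rw [e2]
      conv_lhs => rw [e1]
      apply rtg_update
      rw [if_neg hj]
      exact h j
  have := main Finset.univ
  simpa using this

end Aux2
section Aux3

variable {Sg : Signature} {X : Type} {R : TRS Sg X}

/-! ### Lemma B: substitutions related pointwise by `ored` -/

lemma subst_ored {τ σ : X → Tm Sg X} (h : ∀ x, ored R (τ x) (σ x)) (r : Tm Sg X) :
    ored R (subst τ r) (subst σ r) := by
  set S : TRel Sg X := fun u v => ored R u v ∨ ∃ (τ' σ' : X → Tm Sg X) (r' : Tm Sg X),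
    (∀ x, ored R (τ' x) (σ' x)) ∧ u = subst τ' r' ∧ v = subst σ' r' with hS
  have hsub : ored R ≤ S := fun a b hab => Or.inl hab
  have hpost : S ≤ (oredHom R) S := by
    rintro u v (hor | ⟨τ', σ', r', hτσ, rfl, rfl⟩)
    · rcases ored_dest hor with ⟨m, h1, h2⟩
      exact ⟨m, h1, liftRel_mono hsub _ _ h2⟩
    · rcases tm_cases r' with ⟨x, rfl⟩ | ⟨f, args, rfl⟩
      · rw [subst_var, subst_var]
        rcases ored_dest (hτσ x) with ⟨m, h1, h2⟩
        exact ⟨m, h1, liftRel_mono hsub _ _ h2⟩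
      · rw [subst_node, subst_node]
        exact ⟨_, ReflTransGen.refl, Or.inr ⟨f, _, _, rfl, rfl,
          fun i => Or.inr ⟨τ', σ', args i, hτσ, rfl, rfl⟩⟩⟩
  have hle : S ≤ ored R := by rw [ored]; exact OrderHom.le_gfp (f := oredHom R) hpost
  exact hle _ _ (Or.inr ⟨τ, σ, r, h, rfl, rfl⟩)

/-! ### Linearity -/

def LinTm (l : Tm Sg X) : Prop :=
  ∀ (x : X) (p q : List ℕ), OccursAt x p l → OccursAt x q l → p = q

lemma lin_node {f : Sg.Sym} {ls : Fin (Sg.ar f) → Tm Sg X}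
    (h : LinTm (Tm.node f ls)) (i : Fin (Sg.ar f)) : LinTm (ls i) := by
  intro x p q hp hq
  have := h x ((i : ℕ) :: p) ((i : ℕ) :: q)
    (OccursAt.deeper i rfl hp) (OccursAt.deeper i rfl hq)
  injection this

lemma lin_arg_unique {f : Sg.Sym} {ls : Fin (Sg.ar f) → Tm Sg X}
    (hlin : LinTm (Tm.node f ls)) {x : X} {i j : Fin (Sg.ar f)}
    (hi : Occurs x (ls i)) (hj : Occurs x (ls j)) : i = j := by
  obtain ⟨p, hp⟩ := occurs_occursAt hi
  obtain ⟨q, hq⟩ := occurs_occursAt hj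
  have h := hlin x ((i : ℕ) :: p) ((j : ℕ) :: q)
    (OccursAt.deeper i rfl hp) (OccursAt.deeper j rfl hq)
  injection h with h1 h2
  exact Fin.val_injective h1

/-! ### Lemma A: redex creation -/

lemma redex_creation {l : Tm Sg X} (hfin : FiniteTm l) :
    ∀ σ : X → Tm Sg X, LinTm l → ∀ s, ored R s (subst σ l) →
      ∃ τ, ReflTransGen (Step R) s (subst τ l) ∧ ∀ x, ored R (τ x) (σ x) := by
  classical
  induction hfin with
  | var x heq =>
    subst heq
    intro σ _ s hs
    rw [subst_var] at hs
    refine ⟨fun y => if y = x then s else σ y, ?_, ?_⟩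
    · simp only [subst_var, if_pos, eq_self_iff_true, if_true]
      exact ReflTransGen.refl
    · intro y
      by_cases hy : y = x
      · subst hy; simpa using hs
      · simp [hy, ored_refl]
  | @node t f ls heq hfins ih =>
    subst heq
    intro σ hlin s hs
    rw [subst_node] at hs
    rcases ored_dest hs with ⟨u, hsu, hlift⟩
    rcases hlift with heq' | ⟨g, a, b, rfl, hb, hab⟩
    · refine ⟨σ, ?_, fun x => ored_refl _⟩
      rw [subst_node]
      exact heq' ▸ hsu
    · obtain rfl := node_inj_sym hb
      obtain rfl := node_inj_args hb
      choose τs hτ1 hτ2 using fun i => ih i σ (lin_node hlin i) (a i) (hab i)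
      set τ : X → Tm Sg X :=
        fun x => if h : ∃ i, Occurs x (ls i) then τs h.choose x else σ x with hτ
      have key : ∀ i, subst τ (ls i) = subst (τs i) (ls i) := by
        intro i
        apply subst_ext
        intro x hx
        have hex : ∃ j, Occurs x (ls j) := ⟨i, hx⟩
        have : hex.choose = i := lin_arg_unique hlin hex.choose_spec hx
        rw [hτ]
        simp only [dif_pos hex, this]
      refine ⟨τ, ?_, ?_⟩
      · rw [subst_node]
        refine hsu.trans ?_
        have : ReflTransGen (Step R) (Tm.node f a)
            (Tm.node f (fun i => subst (τs i) (ls i))) := rtg_node fun i => hτ1 i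
        refine this.trans ?_
        have : (fun i => subst (τs i) (ls i)) = fun i => subst τ (ls i) :=
          funext fun i => (key i).symm
        rw [this]
      · intro x
        rw [hτ]
        by_cases h : ∃ i, Occurs x (ls i)
        · simp only [dif_pos h]
          exact hτ2 h.choose x
        · simp only [dif_neg h]
          exact ored_refl _

end Aux3
section Aux4

variable {Sg : Signature} {X : Type} {R : TRS Sg X}

lemma le_ored {S : TRel Sg X} (h : S ≤ (oredHom R) S) : S ≤ ored R := by
  rw [ored]; exact OrderHom.le_gfp (f := oredHom R) h

/-! ### Swap lemma -/

lemma swap_step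
    (hlinear : ∀ l r, (l, r) ∈ R.rules →
      ∀ (x : X) (p q : List ℕ), OccursAt x p l → OccursAt x q l → p = q)
    (hfin : ∀ l r, (l, r) ∈ R.rules → FiniteTm l)
    {p : List ℕ} {m m' : Tm Sg X} (hst : StepAt (RootStep R) p m m') :
    ∀ s, ored R s m → ∃ u, ReflTransGen (Step R) s u ∧ ored R u m' := by
  induction hst with
  | @here m m' hq =>
    intro s hs
    obtain ⟨l, r, hlr, σ, rfl, rfl⟩ := hq
    obtain ⟨τ, h1, h2⟩ := redex_creation (hfin l r hlr) σ (hlinear l r hlr) s hs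
    exact ⟨subst τ r, h1.tail (rootStep_step ⟨l, r, hlr, τ, rfl, rfl⟩), subst_ored h2 r⟩
  | @deeper f ss ts i p hstep hrest ih =>
    intro s hs
    rcases ored_dest hs with ⟨u, hsu, hlift⟩
    rcases hlift with rfl | ⟨g, a, b, rfl, hb, hab⟩
    · refine ⟨Tm.node f ts, hsu.tail ⟨(i : ℕ) :: p, StepAt.deeper i hstep hrest⟩, ored_refl _⟩
    · obtain rfl := node_inj_sym hb
      obtain rfl := node_inj_args hb
      obtain ⟨c, hac, hc⟩ := ih (a i) (hab i)
      refine ⟨Tm.node f (Function.update a i c), ?_, ?_⟩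
      · refine hsu.trans ?_
        have h0 : Tm.node f a = Tm.node f (Function.update a i (a i)) := by
          rw [Function.update_eq_self]
        rw [h0]
        exact rtg_update a i hac
      · apply liftRel_ored
        refine Or.inr ⟨f, _, ts, rfl, rfl, fun j => ?_⟩
        rcases eq_or_ne j i with rfl | hj
        · rw [Function.update_self]; exact hc
        · rw [Function.update_of_ne hj, ← hrest j hj]
          exact hab j

lemma swap_rtg
    (hlinear : ∀ l r, (l, r) ∈ R.rules →
      ∀ (x : X) (p q : List ℕ), OccursAt x p l → OccursAt x q l → p = q)
    (hfin : ∀ l r, (l, r) ∈ R.rules → FiniteTm l)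
    {m m' : Tm Sg X} (h : ReflTransGen (Step R) m m') :
    ∀ s, ored R s m → ∃ u, ReflTransGen (Step R) s u ∧ ored R u m' := by
  induction h with
  | refl => exact fun s hs => ⟨s, ReflTransGen.refl, hs⟩
  | tail _ hstep ih =>
    intro s hs
    obtain ⟨u, h1, h2⟩ := ih s hs
    obtain ⟨q, hq⟩ := hstep
    obtain ⟨v, h3, h4⟩ := swap_step hlinear hfin hq u h2
    exact ⟨v, h1.trans h3, h4⟩

/-! ### Transitivity of `ored` -/

lemma ored_trans
    (hlinear : ∀ l r, (l, r) ∈ R.rules →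
      ∀ (x : X) (p q : List ℕ), OccursAt x p l → OccursAt x q l → p = q)
    (hfin : ∀ l r, (l, r) ∈ R.rules → FiniteTm l)
    {s m t : Tm Sg X} (h1 : ored R s m) (h2 : ored R m t) : ored R s t := by
  set S : TRel Sg X := fun a c => ∃ b, ored R a b ∧ ored R b c with hS
  have hpost : S ≤ (oredHom R) S := by
    rintro a c ⟨b, hab, hbc⟩
    rcases ored_dest hbc with ⟨m1, hbm, hliftbc⟩
    obtain ⟨u, hau, hum⟩ := swap_rtg hlinear hfin hbm a hab
    rcases ored_dest hum with ⟨u1, huu1, hlift2⟩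
    refine ⟨u1, hau.trans huu1, ?_⟩
    rcases hlift2 with rfl | ⟨f, as, bs, rfl, hb, hargs1⟩
    · exact liftRel_mono (fun x y hxy => ⟨y, hxy, ored_refl y⟩ : ored R ≤ S) _ _ hliftbc
    · rcases hliftbc with rfl | ⟨g, bs', cs, hb', rfl, hargs2⟩
      · exact Or.inr ⟨f, as, bs, rfl, hb, fun i => ⟨bs i, hargs1 i, ored_refl _⟩⟩
      · rw [hb'] at hb
        obtain rfl := node_inj_sym hb
        obtain rfl := node_inj_args hb
        exact Or.inr ⟨g, as, cs, rfl, rfl, fun i => ⟨bs' i, hargs1 i, hargs2 i⟩⟩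
  exact le_ored hpost _ _ ⟨m, h1, h2⟩

/-! ### The prefix of an infinitary step is an `ored` reduction -/

lemma eseq_ored
    (hlinear : ∀ l r, (l, r) ∈ R.rules →
      ∀ (x : X) (p q : List ℕ), OccursAt x p l → OccursAt x q l → p = q)
    (hfin : ∀ l r, (l, r) ∈ R.rules → FiniteTm l)
    {s t : Tm Sg X}
    (h : ReflTransGen (fun a b => RootStep R a b ∨ liftRel (ored R) a b) s t) :
    ored R s t := by
  induction h with
  | refl => exact ored_refl _
  | tail _ hstep ih =>
    refine ored_trans hlinear hfin ih ?_
    rcases hstep with h | h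
    · exact step_ored (rootStep_step h)
    · exact liftRel_ored h

end Aux4
/-- **Compression Lemma.** Let `R` be a left-linear TRS (no variable
occurs at two distinct positions of a left-hand side) all of whose left-hand sides
are finite terms. Then every infinitary reduction can be compressed to length at
most `ω`: `s →∞ t` implies `s →^{≤ω} t`. -/
theorem compression (Sg : Signature) (X : Type) [Infinite X] (R : TRS Sg X)
    (hlinear : ∀ l r, (l, r) ∈ R.rules →
      ∀ (x : X) (p q : List ℕ), OccursAt x p l → OccursAt x q l → p = q)
    (hfin : ∀ l r, (l, r) ∈ R.rules → FiniteTm l) :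
    ∀ s t : Tm Sg X, ired R s t → ored R s t := by
  have main : ired R ≤ ored R := by
    rw [ired]
    refine OrderHom.lfp_le (f := iredHom R) ?_
    set G : TRel Sg X := (iredHom R) (ored R) with hGdef
    have hGfix : (iredInnerHom R (ored R)) G = G := OrderHom.map_gfp (iredInnerHom R (ored R))
    set V : TRel Sg X := fun a c => ∃ b, ored R a b ∧ liftRel G b c with hV
    have hGV : G ≤ V := by
      intro a c h
      rw [← hGfix] at h
      obtain ⟨b, h1, h2⟩ := h
      exact ⟨b, eseq_ored hlinear hfin h1, h2⟩
    have hOV : ∀ a b c, ored R a b → V b c → V a c := by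
      rintro a b c hab ⟨m, hbm, hmc⟩
      exact ⟨m, ored_trans hlinear hfin hab hbm, hmc⟩
    have hpost : V ≤ (oredHom R) V := by
      rintro a c ⟨b, hab, hbc⟩
      rcases ored_dest hab with ⟨u, hau, hub⟩
      refine ⟨u, hau, ?_⟩
      rcases hub with rfl | ⟨f, us, bs, rfl, hb, h1⟩
      · exact liftRel_mono (fun x y hxy => hGV x y hxy) _ _ hbc
      · rcases hbc with rfl | ⟨g, bs', cs, hb', rfl, h2⟩
        · exact Or.inr ⟨f, us, bs, rfl, hb, fun i => ⟨bs i, h1 i, Or.inl rfl⟩⟩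
        · have heq : Tm.node g bs' = Tm.node f bs := hb'.symm.trans hb
          obtain rfl := node_inj_sym heq
          obtain rfl := node_inj_args heq
          exact Or.inr ⟨g, us, cs, rfl, rfl,
            fun i => hOV _ _ _ (h1 i) (hGV _ _ (h2 i))⟩
    have hVo : V ≤ ored R := le_ored hpost
    exact fun a c h => hVo a c (hGV a c h)
  exact fun s t h => main s t h
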